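/- Suppose a multi-player game has an optimal equilibrium σ and the total payoff at σ is maximal, i.e., V^M(σ) = sup_{s} V^M(s) (which holds in particular if the game is zero-sum). Then for every coalition A ⊆ M, the coalition value exists and is additive: sup_{s^A} inf_{s^{-A}} V^A(s^A, s^{-A}) = inf_{s^{-A}} sup_{s^A} V^A(s^A, s^{-A}) = V^A(σ) = Σ_{i∈A} V^i(σ). -/
import Mathlib


/-- The profile in which the coalition `A` plays `τ` while all remaining players
play according to `ρ`, i.e. `(τ^A, ρ^{-A})`. -/
def comb {ι : Type*} [DecidableEq ι] {S : ι → Type*} (A : Finset ι)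
    (τ ρ : ∀ i, S i) : ∀ i, S i :=
  fun i => if i ∈ A then τ i else ρ i

/-- Suppose a multi-player game (with bounded payoffs) has an optimal equilibrium
`σ` and the total payoff at `σ` is maximal, i.e. `V^M(σ) = sup_s V^M(s)`.
Then for every coalition `A ⊆ M` the coalition value exists and is additive:
`sup_{s^A} inf_{s^{-A}} V^A = inf_{s^{-A}} sup_{s^A} V^A = V^A(σ) = Σ_{i∈A} V^i(σ)`. -/
theorem coalition_values_additive {ι : Type*} [Fintype ι] [DecidableEq ι]
    {S : ι → Type*} [∀ i, Nonempty (S i)]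
    (V : ι → (∀ i, S i) → ℝ) (C : ℝ) (hC : ∀ k s, |V k s| ≤ C)
    (σ : ∀ i, S i)
    (hOpt : ∀ k, (∀ ρ : ∀ i, S i, V k (Function.update ρ k (σ k)) ≥ V k σ) ∧
      (∀ a : S k, V k σ ≥ V k (Function.update σ k a)))
    (hmax : ∀ s : ∀ i, S i, ∑ i, V i s ≤ ∑ i, V i σ) :
    ∀ A : Finset ι,
      (⨆ τ : ∀ i, S i, ⨅ ρ : ∀ i, S i, ∑ i ∈ A, V i (comb A τ ρ)) =
          ∑ i ∈ A, V i σ ∧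
      (⨅ ρ : ∀ i, S i, ⨆ τ : ∀ i, S i, ∑ i ∈ A, V i (comb A τ ρ)) =
          ∑ i ∈ A, V i σ := by
  intro A
  have hbound : ∀ s : ∀ i, S i, |∑ i ∈ A, V i s| ≤ A.card * C := by
    intro s
    calc |∑ i ∈ A, V i s| ≤ ∑ i ∈ A, |V i s| := Finset.abs_sum_le_sum_abs _ _
    _ ≤ ∑ _i ∈ A, C := Finset.sum_le_sum fun i _ => hC i s
    _ = A.card * C := by rw [Finset.sum_const, nsmul_eq_mul]
  have h1 : ∀ ρ, ∑ i ∈ A, V i σ ≤ ∑ i ∈ A, V i (comb A σ ρ) := by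
    intro ρ
    apply Finset.sum_le_sum
    intro k hk
    have h := (hOpt k).1 (comb A σ ρ)
    have hk' : comb A σ ρ k = σ k := by simp [comb, hk]
    rwa [← hk', Function.update_eq_self] at h
  have h2 : ∀ τ, ∑ i ∈ A, V i (comb A τ σ) ≤ ∑ i ∈ A, V i σ := by
    intro τ
    have hco : ∑ i ∈ Aᶜ, V i σ ≤ ∑ i ∈ Aᶜ, V i (comb A τ σ) := by
      apply Finset.sum_le_sum
      intro k hk
      have hkA : k ∉ A := Finset.mem_compl.mp hk
      have h := (hOpt k).1 (comb A τ σ)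
      have hk' : comb A τ σ k = σ k := by simp [comb, hkA]
      rwa [← hk', Function.update_eq_self] at h
    have htot := hmax (comb A τ σ)
    have e1 : ∑ i ∈ A, V i (comb A τ σ) + ∑ i ∈ Aᶜ, V i (comb A τ σ)
        = ∑ i, V i (comb A τ σ) := Finset.sum_add_sum_compl A _
    have e2 : ∑ i ∈ A, V i σ + ∑ i ∈ Aᶜ, V i σ = ∑ i, V i σ :=
      Finset.sum_add_sum_compl A _
    linarith
  have bddB : ∀ τ, BddBelow (Set.range fun ρ => ∑ i ∈ A, V i (comb A τ ρ)) := by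
    intro τ
    refine ⟨-(A.card * C), ?_⟩
    rintro x ⟨ρ, rfl⟩
    linarith [neg_abs_le (∑ i ∈ A, V i (comb A τ ρ)), hbound (comb A τ ρ)]
  have bddA : ∀ ρ, BddAbove (Set.range fun τ => ∑ i ∈ A, V i (comb A τ ρ)) := by
    intro ρ
    refine ⟨A.card * C, ?_⟩
    rintro x ⟨τ, rfl⟩
    linarith [le_abs_self (∑ i ∈ A, V i (comb A τ ρ)), hbound (comb A τ ρ)]
  constructor
  · apply le_antisymm
    · exact ciSup_le fun τ => ciInf_le_of_le (bddB τ) σ (h2 τ)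
    · refine le_ciSup_of_le ⟨A.card * C, ?_⟩ σ (le_ciInf h1)
      rintro x ⟨τ, rfl⟩
      exact ciInf_le_of_le (bddB τ) σ (le_trans (le_abs_self _) (hbound _))
  · apply le_antisymm
    · exact ciInf_le_of_le ⟨-(A.card * C), by
        rintro x ⟨ρ, rfl⟩
        refine le_ciSup_of_le (bddA ρ) σ ?_
        linarith [neg_abs_le (∑ i ∈ A, V i (comb A σ ρ)), hbound (comb A σ ρ)]⟩
        σ (ciSup_le h2)
    · exact le_ciInf fun ρ => le_ciSup_of_le (bddA ρ) σ (h1 ρ)
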